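/- Random reshuffling deviation bound under relaxed SGC: suppose each $f_i$ is $L_i$-smooth with $L_{\max} = \max_i L_i$, $f = \frac{1}{n}\sum_i f_i$, and $\frac{1}{n}\sum_{i=1}^n\|\nabla f_i(x)\|^2 \leq \rho\|\nabla f(x)\|^2 + \sigma^2$ for all $x$. Consider one epoch of random reshuffling: $\pi$ is a uniformly random permutation of $\{1,\ldots,n\}$ and $x_{j+1} = x_j - \eta \nabla f_{\pi(j+1)}(x_j)$ for $j = 0,\ldots,n-1$. If $\eta \leq \frac{1}{\sqrt{3} n L_{\max}}$, then $\mathbb{E}\left[\sum_{i=0}^{n-1}\|x_i - x_0\|^2\right] \leq 2\eta^2 n^2(\rho + n)\|\nabla f(x_0)\|^2 + 2\eta^2 n^2 \sigma^2$, where the expectation is over the random permutation (and $x_0$ is fixed). -/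

import Mathlib

noncomputable section

open Finset

lemma exists_perm_pair {n : ℕ} {j l j' l' : Fin n} (hjl : j ≠ l) (hjl' : j' ≠ l') :
    ∃ τ : Equiv.Perm (Fin n), τ j' = j ∧ τ l' = l := by
  classical
  set s := Equiv.swap j j' with hs0
  have hs : s j' = j := Equiv.swap_apply_right j j'
  set m := s l' with hm0
  have hmj : m ≠ j := fun h => hjl' ((s.injective ((hm0.symm.trans h).trans hs.symm)).symm)
  refine ⟨Equiv.swap m l * s, ?_, ?_⟩
  · rw [Equiv.Perm.mul_apply, hs, Equiv.swap_apply_of_ne_of_ne (Ne.symm hmj) hjl]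
  · rw [Equiv.Perm.mul_apply, ← hm0, Equiv.swap_apply_left]

lemma sumId_eq (n : ℕ) : ∑ i ∈ range n, (i : ℝ) = n * (n - 1) / 2 := by
  induction n with
  | zero => simp
  | succ m ih => rw [Finset.sum_range_succ, ih]; push_cast; ring

lemma sumSq_eq (n : ℕ) : ∑ i ∈ range n, (i : ℝ) ^ 2 = n * (n - 1) * (2 * n - 1) / 6 := by
  induction n with
  | zero => simp
  | succ m ih => rw [Finset.sum_range_succ, ih]; push_cast; ring

lemma normsq_sum_le {E : Type*} [SeminormedAddCommGroup E] {ι : Type*}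
    (s : Finset ι) (v : ι → E) :
    ‖∑ j ∈ s, v j‖ ^ 2 ≤ (s.card : ℝ) * ∑ j ∈ s, ‖v j‖ ^ 2 := by
  have h1 : ‖∑ j ∈ s, v j‖ ≤ ∑ j ∈ s, ‖v j‖ := norm_sum_le s v
  have h2 : (∑ j ∈ s, ‖v j‖) ^ 2 ≤ (∑ j ∈ s, (1:ℝ) ^ 2) * ∑ j ∈ s, ‖v j‖ ^ 2 := by
    simpa using Finset.sum_mul_sq_le_sq_mul_sq s (fun _ => (1:ℝ)) (fun j => ‖v j‖)
  have h3 : (∑ j ∈ s, (1:ℝ) ^ 2) = s.card := by simp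
  calc ‖∑ j ∈ s, v j‖ ^ 2 ≤ (∑ j ∈ s, ‖v j‖) ^ 2 := by
        apply pow_le_pow_left₀ (norm_nonneg _) h1
    _ ≤ (s.card : ℝ) * ∑ j ∈ s, ‖v j‖ ^ 2 := by rw [← h3]; exact h2

lemma three_term_sq {E : Type*} [SeminormedAddCommGroup E] (a b c : E) :
    ‖a + b + c‖ ^ 2 ≤ 3 * (‖a‖ ^ 2 + ‖b‖ ^ 2 + ‖c‖ ^ 2) := by
  have h1 : ‖a + b + c‖ ≤ ‖a‖ + ‖b‖ + ‖c‖ :=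
    (norm_add_le _ _).trans (by linarith [norm_add_le a b])
  have h2 := pow_le_pow_left₀ (norm_nonneg (a+b+c)) h1 2
  nlinarith [h2, sq_nonneg (‖a‖-‖b‖), sq_nonneg (‖a‖-‖c‖), sq_nonneg (‖b‖-‖c‖)]

lemma grad_avg {d n : ℕ} (f : Fin n → EuclideanSpace ℝ (Fin d) → ℝ)
    (hdiff : ∀ i, Differentiable ℝ (f i)) (x : EuclideanSpace ℝ (Fin d)) :
    gradient (fun x => (n : ℝ)⁻¹ * ∑ i, f i x) x
      = (n : ℝ)⁻¹ • ∑ i, gradient (f i) x := by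
  unfold gradient
  rw [fderiv_const_mul (by exact (Differentiable.fun_sum (fun i _ => hdiff i)).differentiableAt),
    fderiv_fun_sum (fun i _ => (hdiff i).differentiableAt), map_smul, map_sum]

lemma perm_sum_sq {d n : ℕ} (hn : 2 ≤ n) (w : Fin n → EuclideanSpace ℝ (Fin d))
    (hw : ∑ k, w k = 0) (S : Finset (Fin n)) :
    ∑ π : Equiv.Perm (Fin n), ‖∑ j ∈ S, w (π j)‖ ^ 2
      = (n.factorial : ℝ) * ((S.card : ℝ) * ((n : ℝ) - S.card) / ((n : ℝ) * ((n : ℝ) - 1)))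
          * ∑ k, ‖w k‖ ^ 2 := by
  classical
  set T : ℝ := ∑ k, ‖w k‖ ^ 2 with hT
  set c : Fin n → Fin n → ℝ :=
    fun j l => ∑ π : Equiv.Perm (Fin n), (inner ℝ (w (π j)) (w (π l)) : ℝ) with hc
  -- invariance
  have hR : ∀ (τ : Equiv.Perm (Fin n)) (j l : Fin n), c (τ j) (τ l) = c j l := by
    intro τ j l
    simpa [Equiv.Perm.mul_apply] using
      (Equiv.sum_comp (Equiv.mulRight τ)
        (fun π : Equiv.Perm (Fin n) => (inner ℝ (w (π j)) (w (π l)) : ℝ)))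
  have hj0 : (0 : ℕ) < n := by omega
  have hl0 : (1 : ℕ) < n := by omega
  set j₀ : Fin n := ⟨0, hj0⟩
  set l₀ : Fin n := ⟨1, hl0⟩
  have hj0l0 : j₀ ≠ l₀ := Fin.ne_of_val_ne (show (0:ℕ) ≠ 1 by omega)
  set a : ℝ := c j₀ j₀ with ha0
  set c0 : ℝ := c j₀ l₀ with hc00
  have hdiag : ∀ j : Fin n, c j j = a := by
    intro j
    have := hR (Equiv.swap j₀ j) j₀ j₀
    rwa [Equiv.swap_apply_left] at this
  have hoff : ∀ j l : Fin n, j ≠ l → c j l = c0 := by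
    intro j l hjl
    obtain ⟨τ, hτ1, hτ2⟩ := exists_perm_pair hjl hj0l0
    have := hR τ j₀ l₀
    rw [hτ1, hτ2] at this
    exact this
  -- sum of diagonal
  have hsumdiag : (n : ℝ) * a = (n.factorial : ℝ) * T := by
    have h1 : ∑ j : Fin n, c j j = ∑ π : Equiv.Perm (Fin n), ∑ j : Fin n,
        (inner ℝ (w (π j)) (w (π j)) : ℝ) := Finset.sum_comm
    have h2 : ∀ π : Equiv.Perm (Fin n),
        ∑ j : Fin n, (inner ℝ (w (π j)) (w (π j)) : ℝ) = T := by
      intro π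
      rw [hT, ← Equiv.sum_comp π (fun k => ‖w k‖ ^ 2)]
      exact Finset.sum_congr rfl fun j _ => real_inner_self_eq_norm_sq _
    have h3 : ∑ j : Fin n, c j j = (n.factorial : ℝ) * T := by
      rw [h1, Finset.sum_congr rfl fun π _ => h2 π, Finset.sum_const, card_univ,
        Fintype.card_perm, Fintype.card_fin, nsmul_eq_mul]
    have h4 : ∑ j : Fin n, c j j = (n : ℝ) * a := by
      rw [Finset.sum_congr rfl fun j _ => hdiag j, Finset.sum_const, card_univ,
        Fintype.card_fin, nsmul_eq_mul]
    rw [← h3, h4]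
  -- total sum is zero
  have htotal : (n : ℝ) * a + (n : ℝ) * ((n : ℝ) - 1) * c0 = 0 := by
    have h1 : ∑ j : Fin n, ∑ l : Fin n, c j l
        = ∑ π : Equiv.Perm (Fin n), ∑ j : Fin n, ∑ l : Fin n,
            (inner ℝ (w (π j)) (w (π l)) : ℝ) :=
      (Finset.sum_congr rfl fun j _ => Finset.sum_comm).trans Finset.sum_comm
    have h2 : ∀ π : Equiv.Perm (Fin n), ∑ j : Fin n, ∑ l : Fin n,
        (inner ℝ (w (π j)) (w (π l)) : ℝ) = 0 := by
      intro π
      have hz : ∑ j : Fin n, w (π j) = 0 := by rw [Equiv.sum_comp π w]; exact hw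
      simp_rw [← inner_sum, ← sum_inner, hz, inner_zero_left]
    have h3 : ∑ j : Fin n, ∑ l : Fin n, c j l = 0 := by
      rw [h1, Finset.sum_congr rfl fun π _ => h2 π, Finset.sum_const, smul_zero]
    have h4 : ∑ j : Fin n, ∑ l : Fin n, c j l
        = (n : ℝ) * (a + ((n - 1 : ℕ) : ℝ) * c0) := by
      have hrow : ∀ j : Fin n, ∑ l : Fin n, c j l = a + ((n - 1 : ℕ) : ℝ) * c0 := by
        intro j
        rw [← Finset.add_sum_erase univ (c j) (mem_univ j), hdiag j]
        congr 1
        rw [Finset.sum_congr rfl fun l hl => hoff j l (Finset.ne_of_mem_erase hl).symm,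
          Finset.sum_const, Finset.card_erase_of_mem (mem_univ j), card_univ,
          Fintype.card_fin, nsmul_eq_mul]
      rw [Finset.sum_congr rfl fun j _ => hrow j, Finset.sum_const, card_univ,
        Fintype.card_fin, nsmul_eq_mul]
    have h5 := h3 ▸ h4
    have hcast : ((n - 1 : ℕ) : ℝ) = (n : ℝ) - 1 := by
      rw [Nat.cast_sub (by omega)]; norm_num
    rw [hcast] at h5
    nlinarith [h5]
  -- expand the LHS over the subset S
  have hexp : ∑ π : Equiv.Perm (Fin n), ‖∑ j ∈ S, w (π j)‖ ^ 2
      = (S.card : ℝ) * a + (S.card : ℝ) * ((S.card : ℝ) - 1) * c0 := by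
    have h1 : ∀ π : Equiv.Perm (Fin n), ‖∑ j ∈ S, w (π j)‖ ^ 2
        = ∑ j ∈ S, ∑ l ∈ S, (inner ℝ (w (π j)) (w (π l)) : ℝ) := by
      intro π
      rw [← real_inner_self_eq_norm_sq, sum_inner]
      exact Finset.sum_congr rfl fun j _ => inner_sum S (fun l => w (π l)) _
    have h2 : ∑ π : Equiv.Perm (Fin n), ‖∑ j ∈ S, w (π j)‖ ^ 2
        = ∑ j ∈ S, ∑ l ∈ S, c j l := by
      rw [Finset.sum_congr rfl fun π _ => h1 π]
      exact Finset.sum_comm.trans (Finset.sum_congr rfl fun j _ => Finset.sum_comm)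
    rcases Nat.eq_zero_or_pos S.card with hS0 | hS1
    · rw [Finset.card_eq_zero.mp hS0] at h2 ⊢
      simp only [Finset.sum_empty] at h2 ⊢; simp only [norm_zero] at h2; simpa using h2
    · have hrow : ∀ j ∈ S, ∑ l ∈ S, c j l = a + ((S.card - 1 : ℕ) : ℝ) * c0 := by
        intro j hj
        rw [← Finset.add_sum_erase S (c j) hj, hdiag j]
        congr 1
        rw [Finset.sum_congr rfl fun l hl => hoff j l (Finset.ne_of_mem_erase hl).symm,
          Finset.sum_const, Finset.card_erase_of_mem hj, nsmul_eq_mul]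
      rw [h2, Finset.sum_congr rfl hrow, Finset.sum_const, nsmul_eq_mul,
        Nat.cast_sub (by omega)]
      push_cast
      ring
  rw [hexp]
  have hn0 : (0:ℝ) < (n:ℝ) := by positivity
  have hn1 : (0:ℝ) < (n:ℝ) - 1 := by
    have : (2:ℝ) ≤ (n:ℝ) := by exact_mod_cast hn
    linarith
  have ha : a = (n.factorial : ℝ) * T / n := by
    field_simp at hsumdiag ⊢
    linarith [hsumdiag]
  have hc0v : c0 = -((n.factorial : ℝ) * T) / ((n:ℝ) * ((n:ℝ) - 1)) := by
    rw [ha] at htotal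
    field_simp at htotal ⊢
    nlinarith [htotal]
  rw [ha, hc0v]
  field_simp
  ring


/-- One epoch of (re)shuffled incremental updates: starting from `x0`, the
iterate after `j` steps using the sample order given by the permutation `π`,
gradient oracle `g` and step size `η`. -/
def epochIter {d n : ℕ}
    (g : Fin n → EuclideanSpace ℝ (Fin d) → EuclideanSpace ℝ (Fin d))
    (η : ℝ) (x0 : EuclideanSpace ℝ (Fin d)) (π : Equiv.Perm (Fin n)) :
    ℕ → EuclideanSpace ℝ (Fin d)
  | 0 => x0
  | j + 1 =>
      if h : j < n then
        epochIter g η x0 π j - η • g (π ⟨j, h⟩) (epochIter g η x0 π j)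
      else epochIter g η x0 π j

lemma epochIter_eq {d n : ℕ}
    (g : Fin n → EuclideanSpace ℝ (Fin d) → EuclideanSpace ℝ (Fin d))
    (η : ℝ) (x0 : EuclideanSpace ℝ (Fin d)) (π : Equiv.Perm (Fin n)) (i : ℕ) :
    epochIter g η x0 π i = x0 - η • ∑ j ∈ range i,
      (if h : j < n then g (π ⟨j, h⟩) (epochIter g η x0 π j) else 0) := by
  induction i with
  | zero => simp [epochIter]
  | succ m ih =>
    rw [Finset.sum_range_succ]
    by_cases h : m < n
    · rw [show epochIter g η x0 π (m+1)
          = epochIter g η x0 π m - η • g (π ⟨m, h⟩) (epochIter g η x0 π m) by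
        simp [epochIter, h]]
      rw [ih, dif_pos h, smul_add, sub_sub]
    · rw [show epochIter g η x0 π (m+1) = epochIter g η x0 π m by simp [epochIter, h]]
      rw [ih, dif_neg h, add_zero]
set_option maxHeartbeats 2000000 in
/-- Random reshuffling within-epoch deviation bound under the relaxed strong
growth condition; the expectation is over the uniformly random permutation. -/
theorem rr_deviation_bound_relaxed_sgc
    (d n : ℕ) (hn : 2 ≤ n)
    (f : Fin n → EuclideanSpace ℝ (Fin d) → ℝ)
    (hdiff : ∀ i, Differentiable ℝ (f i))
    (F : EuclideanSpace ℝ (Fin d) → ℝ)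
    (hF : F = fun x => (n : ℝ)⁻¹ * ∑ i, f i x)
    (Lmax : ℝ) (hLmax : 0 < Lmax)
    (hsmooth_i : ∀ i, ∀ x y : EuclideanSpace ℝ (Fin d),
      ‖gradient (f i) x - gradient (f i) y‖ ≤ Lmax * ‖x - y‖)
    (ρ σ : ℝ) (hρ : 0 ≤ ρ) (hσ : 0 ≤ σ)
    (hSGC : ∀ x, (n : ℝ)⁻¹ * ∑ i, ‖gradient (f i) x‖ ^ 2
      ≤ ρ * ‖gradient F x‖ ^ 2 + σ ^ 2)
    (η : ℝ) (hη0 : 0 < η) (hη : η ≤ 1 / (Real.sqrt 3 * n * Lmax))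
    (x0 : EuclideanSpace ℝ (Fin d)) :
    ((Nat.factorial n : ℝ))⁻¹ *
        ∑ π : Equiv.Perm (Fin n), ∑ i ∈ Finset.range n,
          ‖epochIter (fun i => gradient (f i)) η x0 π i - x0‖ ^ 2
      ≤ 2 * η ^ 2 * n ^ 2 * (ρ + n) * ‖gradient F x0‖ ^ 2
        + 2 * η ^ 2 * n ^ 2 * σ ^ 2 := by
  classical
  have hnposℕ : 0 < n := by omega
  have hn0 : (0:ℝ) < n := by exact_mod_cast hnposℕ
  have hn1 : (0:ℝ) < (n:ℝ) - 1 := by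
    have : (2:ℝ) ≤ n := by exact_mod_cast hn
    linarith
  set gF := gradient F x0 with hgFdef
  have hG0 : (0:ℝ) ≤ ‖gF‖^2 := sq_nonneg _
  set w : Fin n → EuclideanSpace ℝ (Fin d) := fun k => gradient (f k) x0 - gF with hwdef
  set T : ℝ := ∑ k, ‖w k‖ ^ 2 with hTdef
  have hgrad : gF = (n:ℝ)⁻¹ • ∑ i, gradient (f i) x0 := by
    rw [hgFdef, hF]; exact grad_avg f hdiff x0
  have hsumg : ∑ k, gradient (f k) x0 = (n:ℝ) • gF := by
    rw [hgrad, smul_smul, mul_inv_cancel₀ (ne_of_gt hn0), one_smul]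
  have hw0 : ∑ k, w k = 0 := by
    simp only [hwdef]
    rw [Finset.sum_sub_distrib, hsumg, Finset.sum_const, card_univ, Fintype.card_fin,
      ← Nat.cast_smul_eq_nsmul ℝ, sub_self]
  have hT0 : 0 ≤ T := Finset.sum_nonneg fun k _ => sq_nonneg _
  have hTval : T = (∑ k, ‖gradient (f k) x0‖ ^ 2) - n * ‖gF‖^2 := by
    have h1 : ∀ k : Fin n, ‖w k‖^2
        = ‖gradient (f k) x0‖^2 - 2 * (inner ℝ (gradient (f k) x0) gF : ℝ) + ‖gF‖^2 :=
      fun k => norm_sub_sq_real _ _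
    rw [hTdef, Finset.sum_congr rfl fun k _ => h1 k, Finset.sum_add_distrib,
      Finset.sum_sub_distrib, ← Finset.mul_sum, ← sum_inner, hsumg,
      real_inner_smul_left, real_inner_self_eq_norm_sq, Finset.sum_const,
      card_univ, Fintype.card_fin, nsmul_eq_mul]
    ring
  have hTb : T ≤ (n:ℝ) * (ρ * ‖gF‖^2 + σ^2) := by
    have h2 := hSGC x0
    rw [← hgFdef] at h2
    have h3 := mul_le_mul_of_nonneg_left h2 hn0.le
    rw [← mul_assoc, mul_inv_cancel₀ (ne_of_gt hn0), one_mul] at h3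
    have h4 : (0:ℝ) ≤ (n:ℝ) * ‖gF‖^2 := mul_nonneg hn0.le hG0
    linarith
  have hηsq : 3 * η^2 * Lmax^2 * (n:ℝ)^2 ≤ 1 := by
    have hc : (0:ℝ) < Real.sqrt 3 * n * Lmax :=
      mul_pos (mul_pos (Real.sqrt_pos.mpr (by norm_num)) hn0) hLmax
    have h1 : η * (Real.sqrt 3 * n * Lmax) ≤ 1 := (le_div_iff₀ hc).mp hη
    have hs3 : Real.sqrt 3 ^ 2 = 3 := Real.sq_sqrt (by norm_num)
    have h2 : (η * (Real.sqrt 3 * n * Lmax))^2 ≤ 1 := by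
      nlinarith [mul_nonneg hη0.le hc.le]
    have h5 : (η * (Real.sqrt 3 * n * Lmax))^2 = 3 * η^2 * Lmax^2 * (n:ℝ)^2 := by
      rw [mul_pow, mul_pow, mul_pow, hs3]; ring
    linarith
  set SS : ℕ → Finset (Fin n) := fun i => univ.filter (fun j : Fin n => (j:ℕ) < i)
    with hSSdef
  have hcard : ∀ i, i ≤ n → (SS i).card = i := by
    intro i hi
    have h2 : (range n).filter (fun j => j < i) = range i := by
      ext a; simp only [Finset.mem_filter, Finset.mem_range]; omega
    calc (SS i).card = ∑ j : Fin n, if (j:ℕ) < i then 1 else 0 := Finset.card_filter _ _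
      _ = ∑ j ∈ range n, if j < i then 1 else 0 :=
          Fin.sum_univ_eq_sum_range (fun j => if j < i then 1 else 0) n
      _ = ((range n).filter (fun j => j < i)).card := (Finset.card_filter _ _).symm
      _ = (range i).card := by rw [h2]
      _ = i := card_range i
  have hreindex : ∀ (π : Equiv.Perm (Fin n)) (i : ℕ), i ≤ n →
      ∑ j ∈ SS i, w (π j)
        = ∑ j ∈ range i, (if h : j < n then w (π ⟨j, h⟩) else 0) := by
    intro π i hi
    have h2 : (range n).filter (fun j => j < i) = range i := by
      ext a; simp only [Finset.mem_filter, Finset.mem_range]; omega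
    calc ∑ j ∈ SS i, w (π j)
        = ∑ j : Fin n, if (j:ℕ) < i then w (π j) else 0 := Finset.sum_filter _ _
      _ = ∑ j ∈ range n,
            (if j < i then (if h : j < n then w (π ⟨j,h⟩) else 0) else 0) := by
          rw [← Fin.sum_univ_eq_sum_range
            (fun j => if j < i then (if h : j < n then w (π ⟨j,h⟩) else 0) else 0) n]
          exact Finset.sum_congr rfl fun j _ => by
            by_cases hj : (j:ℕ) < i <;> simp [hj, j.isLt]
      _ = ∑ j ∈ (range n).filter (fun j => j < i),
            (if h : j < n then w (π ⟨j,h⟩) else 0) := (Finset.sum_filter _ _).symm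
      _ = ∑ j ∈ range i, (if h : j < n then w (π ⟨j,h⟩) else 0) := by rw [h2]
  set X : Equiv.Perm (Fin n) → ℕ → EuclideanSpace ℝ (Fin d) :=
    epochIter (fun i => gradient (f i)) η x0 with hXdef
  have hE : ∀ (π : Equiv.Perm (Fin n)) (i : ℕ), X π i = x0 - η • ∑ j ∈ range i,
      (if h : j < n then gradient (f (π ⟨j,h⟩)) (X π j) else 0) := by
    intro π i
    rw [hXdef, epochIter_eq]
  -- per-permutation, per-step bound
  have hclaim1 : ∀ (π : Equiv.Perm (Fin n)), ∀ i ∈ range n,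
      ‖X π i - x0‖^2 ≤ 3 * η^2 *
        ((i:ℝ) * (Lmax^2 * ∑ j ∈ range n, ‖X π j - x0‖^2)
          + ‖∑ j ∈ SS i, w (π j)‖^2 + (i:ℝ)^2 * ‖gF‖^2) := by
    intro π i hi
    have hin : i ≤ n := le_of_lt (mem_range.mp hi)
    have hx : X π i - x0 = -(η • ∑ j ∈ range i,
        (if h : j < n then gradient (f (π ⟨j,h⟩)) (X π j) else 0)) := by
      rw [hE π i, sub_sub_cancel_left]
    have hsplit : ∀ j ∈ range i,
        (if h : j < n then gradient (f (π ⟨j,h⟩)) (X π j) else 0)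
        = (if h : j < n then gradient (f (π ⟨j,h⟩)) (X π j)
            - gradient (f (π ⟨j,h⟩)) x0 else 0)
          + (if h : j < n then w (π ⟨j,h⟩) else 0) + gF := by
      intro j hj
      have hjn : j < n := lt_of_lt_of_le (mem_range.mp hj) hin
      rw [dif_pos hjn, dif_pos hjn, dif_pos hjn]
      simp only [hwdef]
      abel
    have hsum : ∑ j ∈ range i, (if h : j < n then gradient (f (π ⟨j,h⟩)) (X π j) else 0)
        = (∑ j ∈ range i, (if h : j < n then gradient (f (π ⟨j,h⟩)) (X π j)
            - gradient (f (π ⟨j,h⟩)) x0 else 0))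
          + (∑ j ∈ SS i, w (π j)) + (i:ℝ) • gF := by
      rw [Finset.sum_congr rfl hsplit, Finset.sum_add_distrib, Finset.sum_add_distrib,
        hreindex π i hin, Finset.sum_const, card_range, ← Nat.cast_smul_eq_nsmul ℝ]
    rw [hx, hsum, norm_neg, norm_smul, Real.norm_eq_abs, abs_of_pos hη0, mul_pow]
    have h3 := three_term_sq
      (∑ j ∈ range i, (if h : j < n then gradient (f (π ⟨j,h⟩)) (X π j)
        - gradient (f (π ⟨j,h⟩)) x0 else 0))
      (∑ j ∈ SS i, w (π j)) ((i:ℝ) • gF)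
    have hP : ‖∑ j ∈ range i, (if h : j < n then gradient (f (π ⟨j,h⟩)) (X π j)
        - gradient (f (π ⟨j,h⟩)) x0 else 0)‖^2
        ≤ (i:ℝ) * (Lmax^2 * ∑ j ∈ range n, ‖X π j - x0‖^2) := by
      have h4 := normsq_sum_le (range i)
        (fun j => (if h : j < n then gradient (f (π ⟨j,h⟩)) (X π j)
          - gradient (f (π ⟨j,h⟩)) x0 else 0))
      rw [card_range] at h4
      have h5 : ∑ j ∈ range i, ‖(if h : j < n then gradient (f (π ⟨j,h⟩)) (X π j)
          - gradient (f (π ⟨j,h⟩)) x0 else 0)‖^2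
          ≤ Lmax^2 * ∑ j ∈ range n, ‖X π j - x0‖^2 := by
        rw [Finset.mul_sum]
        calc ∑ j ∈ range i, ‖(if h : j < n then gradient (f (π ⟨j,h⟩)) (X π j)
              - gradient (f (π ⟨j,h⟩)) x0 else 0)‖^2
            ≤ ∑ j ∈ range i, Lmax^2 * ‖X π j - x0‖^2 := by
              apply Finset.sum_le_sum
              intro j hj
              have hjn : j < n := lt_of_lt_of_le (mem_range.mp hj) hin
              rw [dif_pos hjn]
              have h6 := hsmooth_i (π ⟨j, hjn⟩) (X π j) x0
              have h7 := pow_le_pow_left₀ (norm_nonneg _) h6 2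
              rw [mul_pow] at h7
              exact h7
          _ ≤ ∑ j ∈ range n, Lmax^2 * ‖X π j - x0‖^2 := by
              apply Finset.sum_le_sum_of_subset_of_nonneg
                (Finset.range_subset_range.mpr hin)
              intro j _ _; positivity
      calc ‖∑ j ∈ range i, (if h : j < n then gradient (f (π ⟨j,h⟩)) (X π j)
            - gradient (f (π ⟨j,h⟩)) x0 else 0)‖^2
          ≤ (i:ℝ) * ∑ j ∈ range i, ‖(if h : j < n then gradient (f (π ⟨j,h⟩)) (X π j)
            - gradient (f (π ⟨j,h⟩)) x0 else 0)‖^2 := h4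
        _ ≤ (i:ℝ) * (Lmax^2 * ∑ j ∈ range n, ‖X π j - x0‖^2) :=
            mul_le_mul_of_nonneg_left h5 (Nat.cast_nonneg i)
    have hR : ‖(i:ℝ) • gF‖^2 = (i:ℝ)^2 * ‖gF‖^2 := by
      rw [norm_smul, Real.norm_eq_abs, abs_of_nonneg (Nat.cast_nonneg i), mul_pow]
    rw [hR] at h3
    have h8 : ‖(∑ j ∈ range i, (if h : j < n then gradient (f (π ⟨j,h⟩)) (X π j)
          - gradient (f (π ⟨j,h⟩)) x0 else 0))
        + (∑ j ∈ SS i, w (π j)) + (i:ℝ) • gF‖^2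
        ≤ 3 * ((i:ℝ) * (Lmax^2 * ∑ j ∈ range n, ‖X π j - x0‖^2)
          + ‖∑ j ∈ SS i, w (π j)‖^2 + (i:ℝ)^2 * ‖gF‖^2) := by linarith
    have h9 := mul_le_mul_of_nonneg_left h8 (sq_nonneg η)
    linarith [h9]
  -- per-permutation summed bound
  have hclaim2 : ∀ π : Equiv.Perm (Fin n),
      ∑ i ∈ range n, ‖X π i - x0‖^2
        ≤ 6 * η^2 * (∑ i ∈ range n, ‖∑ j ∈ SS i, w (π j)‖^2)
          + 2 * η^2 * (n:ℝ)^3 * ‖gF‖^2 := by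
    intro π
    set Sp := ∑ i ∈ range n, ‖X π i - x0‖^2 with hSpdef
    set Bt := ∑ i ∈ range n, ‖∑ j ∈ SS i, w (π j)‖^2 with hBtdef
    have hSnn : (0:ℝ) ≤ Sp := Finset.sum_nonneg fun i _ => sq_nonneg _
    have hBnn : (0:ℝ) ≤ Bt := Finset.sum_nonneg fun i _ => sq_nonneg _
    have h1 : Sp ≤ ∑ i ∈ range n, 3 * η^2 *
        ((i:ℝ) * (Lmax^2 * Sp) + ‖∑ j ∈ SS i, w (π j)‖^2 + (i:ℝ)^2 * ‖gF‖^2) :=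
      Finset.sum_le_sum (hclaim1 π)
    have h2 : ∑ i ∈ range n, 3 * η^2 *
        ((i:ℝ) * (Lmax^2 * Sp) + ‖∑ j ∈ SS i, w (π j)‖^2 + (i:ℝ)^2 * ‖gF‖^2)
        = 3 * η^2 * ((∑ i ∈ range n, (i:ℝ)) * (Lmax^2 * Sp) + Bt
            + (∑ i ∈ range n, (i:ℝ)^2) * ‖gF‖^2) := by
      rw [← Finset.mul_sum, Finset.sum_add_distrib, Finset.sum_add_distrib,
        ← Finset.sum_mul, ← Finset.sum_mul, hBtdef]
    set a1 : ℝ := ∑ i ∈ range n, (i:ℝ) with ha1def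
    set a2 : ℝ := ∑ i ∈ range n, (i:ℝ)^2 with ha2def
    have hsum1 : a1 ≤ (n:ℝ)^2/2 := by rw [ha1def, sumId_eq]; nlinarith [hn0]
    have hsum2 : a2 ≤ (n:ℝ)^3/3 := by rw [ha2def, sumSq_eq]; nlinarith [hn0]
    have key : Sp ≤ 3 * η^2 * (a1 * (Lmax^2 * Sp) + Bt + a2 * ‖gF‖^2) :=
      h1.trans_eq h2
    have p1 : a1 * (Lmax^2 * Sp) ≤ (n:ℝ)^2/2 * (Lmax^2 * Sp) :=
      mul_le_mul_of_nonneg_right hsum1 (mul_nonneg (sq_nonneg _) hSnn)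
    have p2 : a2 * ‖gF‖^2 ≤ (n:ℝ)^3/3 * ‖gF‖^2 :=
      mul_le_mul_of_nonneg_right hsum2 hG0
    have hq : (0:ℝ) ≤ 3 * η^2 := by positivity
    have p3 : Sp ≤ 3 * η^2 * ((n:ℝ)^2/2 * (Lmax^2 * Sp) + Bt + (n:ℝ)^3/3 * ‖gF‖^2) :=
      key.trans (mul_le_mul_of_nonneg_left (by linarith) hq)
    have p4 : 3 * η^2 * Lmax^2 * (n:ℝ)^2 * Sp ≤ 1 * Sp :=
      mul_le_mul_of_nonneg_right hηsq hSnn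
    linarith [p3, p4]
  -- expected bound on the permutation-fluctuation term
  have hclaim3 : ∑ π : Equiv.Perm (Fin n), ∑ i ∈ range n, ‖∑ j ∈ SS i, w (π j)‖^2
      ≤ (n.factorial : ℝ) * ((n:ℝ)/3) * T := by
    rw [Finset.sum_comm]
    have h1 : ∀ i ∈ range n, ∑ π : Equiv.Perm (Fin n), ‖∑ j ∈ SS i, w (π j)‖^2
        = ((n.factorial : ℝ) * T / ((n:ℝ)*((n:ℝ)-1))) * ((i:ℝ) * ((n:ℝ) - i)) := by
      intro i hi
      rw [perm_sum_sq hn w hw0 (SS i), hcard i (le_of_lt (mem_range.mp hi)), ← hTdef]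
      ring
    rw [Finset.sum_congr rfl h1, ← Finset.mul_sum]
    have h3 : ∑ i ∈ range n, (i:ℝ) * ((n:ℝ) - i) ≤ (n:ℝ)^2 * ((n:ℝ)-1) / 3 := by
      have h4 : ∑ i ∈ range n, (i:ℝ) * ((n:ℝ) - i)
          = (n:ℝ) * (∑ i ∈ range n, (i:ℝ)) - ∑ i ∈ range n, (i:ℝ)^2 := by
        rw [Finset.mul_sum, ← Finset.sum_sub_distrib]
        exact Finset.sum_congr rfl fun i _ => by ring
      rw [h4, sumId_eq, sumSq_eq]
      nlinarith [hn0, hn1, mul_nonneg hn0.le (sq_nonneg ((n:ℝ)-1))]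
    have h5 : (0:ℝ) ≤ (n.factorial : ℝ) * T / ((n:ℝ)*((n:ℝ)-1)) :=
      div_nonneg (mul_nonneg (Nat.cast_nonneg _) hT0) (mul_pos hn0 hn1).le
    calc ((n.factorial : ℝ) * T / ((n:ℝ)*((n:ℝ)-1)))
          * ∑ i ∈ range n, (i:ℝ) * ((n:ℝ) - i)
        ≤ ((n.factorial : ℝ) * T / ((n:ℝ)*((n:ℝ)-1))) * ((n:ℝ)^2 * ((n:ℝ)-1) / 3) :=
          mul_le_mul_of_nonneg_left h3 h5
      _ = (n.factorial : ℝ) * ((n:ℝ)/3) * T := by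
          field_simp
  -- assemble
  have hfpos : (0:ℝ) < (n.factorial : ℝ) := by exact_mod_cast Nat.factorial_pos n
  have hfinal : ∑ π : Equiv.Perm (Fin n), ∑ i ∈ range n, ‖X π i - x0‖^2
      ≤ (n.factorial : ℝ) * (2 * η^2 * (n:ℝ)^2 * (ρ + n) * ‖gF‖^2
          + 2 * η^2 * (n:ℝ)^2 * σ^2) := by
    calc ∑ π : Equiv.Perm (Fin n), ∑ i ∈ range n, ‖X π i - x0‖^2
        ≤ ∑ π : Equiv.Perm (Fin n),
            (6 * η^2 * (∑ i ∈ range n, ‖∑ j ∈ SS i, w (π j)‖^2)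
              + 2 * η^2 * (n:ℝ)^3 * ‖gF‖^2) :=
          Finset.sum_le_sum fun π _ => hclaim2 π
      _ = 6 * η^2 * (∑ π : Equiv.Perm (Fin n),
              ∑ i ∈ range n, ‖∑ j ∈ SS i, w (π j)‖^2)
            + (n.factorial : ℝ) * (2 * η^2 * (n:ℝ)^3 * ‖gF‖^2) := by
          rw [Finset.sum_add_distrib, ← Finset.mul_sum, Finset.sum_const, card_univ,
            Fintype.card_perm, Fintype.card_fin, nsmul_eq_mul]
      _ ≤ 6 * η^2 * ((n.factorial : ℝ) * ((n:ℝ)/3) * T)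
            + (n.factorial : ℝ) * (2 * η^2 * (n:ℝ)^3 * ‖gF‖^2) := by
          have := mul_le_mul_of_nonneg_left hclaim3 (by positivity : (0:ℝ) ≤ 6 * η^2)
          linarith
      _ ≤ 6 * η^2 * ((n.factorial : ℝ) * ((n:ℝ)/3) * ((n:ℝ) * (ρ * ‖gF‖^2 + σ^2)))
            + (n.factorial : ℝ) * (2 * η^2 * (n:ℝ)^3 * ‖gF‖^2) := by
          have h6 : (0:ℝ) ≤ 6 * η^2 * ((n.factorial : ℝ) * ((n:ℝ)/3)) := by positivity
          nlinarith [mul_le_mul_of_nonneg_left hTb h6]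
      _ = (n.factorial : ℝ) * (2 * η^2 * (n:ℝ)^2 * (ρ + n) * ‖gF‖^2
            + 2 * η^2 * (n:ℝ)^2 * σ^2) := by ring
  calc ((Nat.factorial n : ℝ))⁻¹ *
        ∑ π : Equiv.Perm (Fin n), ∑ i ∈ range n, ‖X π i - x0‖^2
      ≤ ((Nat.factorial n : ℝ))⁻¹ * ((n.factorial : ℝ)
          * (2 * η^2 * (n:ℝ)^2 * (ρ + n) * ‖gF‖^2 + 2 * η^2 * (n:ℝ)^2 * σ^2)) :=
        mul_le_mul_of_nonneg_left hfinal (inv_nonneg.mpr hfpos.le)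
    _ = 2 * η^2 * (n:ℝ)^2 * (ρ + n) * ‖gF‖^2 + 2 * η^2 * (n:ℝ)^2 * σ^2 := by
        field_simp
    _ = 2 * η ^ 2 * n ^ 2 * (ρ + n) * ‖gF‖ ^ 2 + 2 * η ^ 2 * n ^ 2 * σ ^ 2 := by ring
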